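/- Let X be a complex Banach space, U a bounded invertible operator on X, and A a nonzero bounded operator on X with U A U⁻¹ = γ A, where γ ∈ ℂ, |γ| = 1, and γ is not a root of unity. Let w be a bounded operator on X commuting with A and set T = w U. Assume there is a sequence of complex polynomials (p_k) with p_k(0) = 0 such that ‖w − p_k(A)‖ → 0 in operator norm. Then the sets σ(T) and σ_ap(T) are rotation invariant: if λ belongs to one of these sets and μ ∈ ℂ with |μ| = 1, then μλ belongs to the same set. -/

import Mathlib

open Filter Topology

/-- The approximate point spectrum of a bounded operator. -/
def approxPointSpectrum {X : Type*} [NormedAddCommGroup X] [NormedSpace ℂ X]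
    (T : X →L[ℂ] X) : Set ℂ :=
  {l : ℂ | ∃ x : ℕ → X, (∀ n, ‖x n‖ = 1) ∧
    Tendsto (fun n => ‖T (x n) - l • x n‖) atTop (nhds 0)}

/-- A subset of `ℂ` is rotation invariant if it is stable under multiplication by
unimodular numbers. -/
def RotationInvariant (s : Set ℂ) : Prop :=
  ∀ l ∈ s, ∀ μ : ℂ, ‖μ‖ = 1 → μ * l ∈ s

section AuxComplex
open Complex

lemma dense_pow_circle {γ : ℂ} (hγ : ‖γ‖ = 1) (hroot : ∀ n : ℕ, 1 ≤ n → γ ^ n ≠ 1)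
    (μ : ℂ) (hμ : ‖μ‖ = 1) {ε : ℝ} (hε : 0 < ε) : ∃ n : ℕ, ‖γ ^ n - μ‖ < ε := by
  set ε' : ℝ := min ε 1 / 2 with hε'def
  have hε'pos : 0 < ε' := by positivity
  have hε'le : 2 * ε' ≤ ε := by
    rw [hε'def]; have := min_le_left ε 1; linarith
  have hε'1 : ε' ≤ 1 := by
    rw [hε'def]; have := min_le_right ε 1; linarith
  -- norms of powers
  have hγn : ∀ n : ℕ, ‖γ ^ n‖ = 1 := by
    intro n; rw [norm_pow, hγ, one_pow]
  have hγ0 : γ ≠ 0 := by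
    intro h; rw [h] at hγ; simp at hγ
  -- pigeonhole on arguments
  have hargmem : ∀ n : ℕ, Complex.arg (γ ^ n) ∈ Set.Icc (-Real.pi) Real.pi :=
    fun n => ⟨(Complex.neg_pi_lt_arg _).le, Complex.arg_le_pi _⟩
  obtain ⟨a, -, φ, hφ, hconv⟩ := (isCompact_Icc).tendsto_subseq hargmem
  obtain ⟨N, hN⟩ := (Metric.tendsto_atTop.mp hconv) (ε' / 2) (by positivity)
  set i := φ N with hidef
  set j := φ (N + 1) with hjdef
  have hij : i < j := hφ (Nat.lt_succ_self N)
  set β : ℝ := Complex.arg (γ ^ j) - Complex.arg (γ ^ i) with hβdef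
  have hβε : |β| < ε' := by
    have h1 := hN N (le_refl N)
    have h2 := hN (N + 1) (Nat.le_succ N)
    rw [Real.dist_eq] at h1 h2
    have : β = ((γ ^ j).arg - a) - ((γ ^ i).arg - a) := by ring
    rw [this]
    calc |((γ ^ j).arg - a) - ((γ ^ i).arg - a)| ≤ |(γ ^ j).arg - a| + |(γ ^ i).arg - a| :=
          abs_sub _ _
      _ < ε' / 2 + ε' / 2 := add_lt_add h2 h1
      _ = ε' := by ring
  set k : ℕ := j - i with hkdef
  have hk1 : 1 ≤ k := by omega
  -- exponential representations
  have hrep : ∀ n : ℕ, γ ^ n = Complex.exp ((γ ^ n).arg * I) := by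
    intro n
    have := Complex.norm_mul_exp_arg_mul_I (γ ^ n)
    rw [hγn n] at this
    simpa using this.symm
  have hexpk : γ ^ k = Complex.exp (β * I) := by
    have h1 : γ ^ i * γ ^ k = γ ^ j := by rw [← pow_add]; congr 1; omega
    have h2 : γ ^ k = γ ^ j * (γ ^ i)⁻¹ := by
      field_simp [pow_ne_zero i hγ0] at h1 ⊢
      linear_combination h1
    rw [h2, hrep i, hrep j, ← Complex.exp_neg, ← Complex.exp_add]
    congr 1
    push_cast [hβdef]
    ring
  have hβ0 : β ≠ 0 := by
    intro h
    apply hroot k hk1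
    rw [hexpk, h]; simp
  -- target representation
  have hμ0 : μ ≠ 0 := by intro h; rw [h] at hμ; simp at hμ
  have hμrep : μ = Complex.exp (μ.arg * I) := by
    have := Complex.norm_mul_exp_arg_mul_I μ
    rw [hμ] at this
    simpa using this.symm
  set t : ℝ := if 0 < β then μ.arg + 2 * Real.pi else μ.arg - 2 * Real.pi with htdef
  have hexpt : Complex.exp (t * I) = μ := by
    rw [htdef]
    split_ifs
    · push_cast
      rw [add_mul, Complex.exp_add, Complex.exp_two_pi_mul_I, mul_one, ← hμrep]
    · push_cast
      rw [sub_mul, Complex.exp_sub, Complex.exp_two_pi_mul_I, div_one, ← hμrep]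
  have hq0 : 0 ≤ t / β := by
    rcases lt_or_gt_of_ne hβ0 with hneg | hpos
    · have ht : t ≤ 0 := by
        rw [htdef, if_neg (not_lt.mpr hneg.le)]
        have := Complex.arg_le_pi μ
        have hπ := Real.pi_gt_three
        linarith
      exact div_nonneg_of_nonpos ht hneg.le
    · have ht : 0 ≤ t := by
        rw [htdef, if_pos hpos]
        have := Complex.neg_pi_lt_arg μ
        have hπ := Real.pi_gt_three
        linarith
      exact div_nonneg ht hpos.le
  set q : ℝ := t / β with hqdef
  set m : ℕ := Nat.floor q with hmdef
  have hm1 : |(m : ℝ) - q| ≤ 1 := by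
    rw [abs_le]
    constructor
    · have := Nat.lt_floor_add_one q; linarith
    · have := Nat.floor_le hq0; linarith
  have hmβt : |(m : ℝ) * β - t| ≤ |β| := by
    have ht : t = q * β := by rw [hqdef, div_mul_cancel₀ _ hβ0]
    have : (m : ℝ) * β - t = ((m : ℝ) - q) * β := by rw [ht]; ring
    rw [this, abs_mul]
    calc |(m : ℝ) - q| * |β| ≤ 1 * |β| := mul_le_mul_of_nonneg_right hm1 (abs_nonneg _)
      _ = |β| := one_mul _
  refine ⟨k * m, ?_⟩
  set s : ℝ := (m : ℝ) * β - t with hsdef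
  have hpow : γ ^ (k * m) = Complex.exp (((m : ℝ) * β) * I) := by
    rw [pow_mul, hexpk, ← Complex.exp_nat_mul]
    congr 1
    push_cast
    ring
  have hfact : Complex.exp (((m : ℝ) * β) * I) - μ
      = Complex.exp (t * I) * (Complex.exp ((s : ℂ) * I) - 1) := by
    rw [mul_sub, mul_one, ← Complex.exp_add, hexpt]
    congr 2
    rw [hsdef]
    push_cast
    ring
  have habs : ‖(s : ℂ) * I‖ = |s| := by
    rw [norm_mul, Complex.norm_I, mul_one, Complex.norm_real, Real.norm_eq_abs]
  calc ‖γ ^ (k * m) - μ‖ = ‖Complex.exp (t * I)‖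
        * ‖Complex.exp ((s : ℂ) * I) - 1‖ := by
        rw [hpow, hfact, norm_mul]
    _ = ‖Complex.exp ((s : ℂ) * I) - 1‖ := by
        rw [Complex.norm_exp_ofReal_mul_I, one_mul]
    _ ≤ 2 * ‖(s : ℂ) * I‖ := by
        apply Complex.norm_exp_sub_one_le
        rw [habs]
        calc |s| ≤ |β| := hmβt
          _ ≤ ε' := hβε.le
          _ ≤ 1 := hε'1
    _ = 2 * |s| := by rw [habs]
    _ ≤ 2 * |β| := by have := hmβt; linarith
    _ < 2 * ε' := by linarith
    _ ≤ ε := hε'le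

end AuxComplex

section Aux
variable {X : Type*} [NormedAddCommGroup X] [NormedSpace ℂ X]

lemma apSpec_iff (T : X →L[ℂ] X) (l : ℂ) :
    l ∈ approxPointSpectrum T ↔ ∀ ε : ℝ, 0 < ε → ∃ x : X, ‖x‖ = 1 ∧ ‖T x - l • x‖ < ε := by
  constructor
  · rintro ⟨x, hx1, hx2⟩ ε hε
    obtain ⟨n, hn⟩ := (hx2.eventually_lt_const hε).exists
    exact ⟨x n, hx1 n, hn⟩
  · intro h
    have H : ∀ n : ℕ, ∃ x : X, ‖x‖ = 1 ∧ ‖T x - l • x‖ < 1 / (n + 1) :=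
      fun n => h _ (by positivity)
    choose x h1 h2 using H
    refine ⟨x, h1, squeeze_zero (fun n => norm_nonneg _) (fun n => (h2 n).le)
      tendsto_one_div_add_atTop_nhds_zero_nat⟩

lemma isClosed_apSpec (T : X →L[ℂ] X) : IsClosed (approxPointSpectrum T) := by
  refine isClosed_of_closure_subset ?_
  intro l hl
  rw [apSpec_iff]
  intro ε hε
  obtain ⟨l', hl', hd⟩ := Metric.mem_closure_iff.mp hl (ε / 2) (by positivity)
  obtain ⟨x, hx1, hx2⟩ := (apSpec_iff T l').mp hl' (ε / 2) (by positivity)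
  refine ⟨x, hx1, ?_⟩
  have : T x - l • x = (T x - l' • x) + (l' - l) • x := by
    rw [sub_smul]; abel
  rw [this]
  calc ‖(T x - l' • x) + (l' - l) • x‖ ≤ ‖T x - l' • x‖ + ‖(l' - l) • x‖ := norm_add_le _ _
    _ = ‖T x - l' • x‖ + ‖l' - l‖ := by rw [norm_smul, hx1, mul_one]
    _ < ε / 2 + ε / 2 := by
        have : ‖l' - l‖ = dist l l' := by rw [dist_comm, dist_eq_norm]
        rw [this]; exact add_lt_add hx2 hd
    _ = ε := by ring

lemma apSpec_subset_spectrum [CompleteSpace X] (T : X →L[ℂ] X) :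
    approxPointSpectrum T ⊆ spectrum ℂ T := by
  intro l hl
  by_contra h
  rw [spectrum.notMem_iff] at h
  obtain ⟨u, hu⟩ := h
  obtain ⟨x, hx1, hx2⟩ := hl
  have key : ∀ n, (1:ℝ) ≤ ‖(↑u⁻¹ : X →L[ℂ] X)‖ * ‖T (x n) - l • x n‖ := by
    intro n
    have h1 : (↑u⁻¹ * ↑u : X →L[ℂ] X) (x n) = x n := by rw [u.inv_mul]; rfl
    have h2 : (↑u : X →L[ℂ] X) (x n) = l • x n - T (x n) := by
      rw [hu]
      simp [Algebra.algebraMap_eq_smul_one, ContinuousLinearMap.sub_apply,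
        ContinuousLinearMap.smul_apply, ContinuousLinearMap.one_apply]
    have := hx1 n
    calc (1:ℝ) = ‖x n‖ := (hx1 n).symm
      _ = ‖(↑u⁻¹ : X →L[ℂ] X) ((↑u : X →L[ℂ] X) (x n))‖ := by
          rw [← ContinuousLinearMap.mul_apply, h1]
      _ ≤ ‖(↑u⁻¹ : X →L[ℂ] X)‖ * ‖(↑u : X →L[ℂ] X) (x n)‖ :=
          ContinuousLinearMap.le_opNorm _ _
      _ = ‖(↑u⁻¹ : X →L[ℂ] X)‖ * ‖T (x n) - l • x n‖ := by rw [h2, norm_sub_rev]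
  have h3 : Tendsto (fun n => ‖(↑u⁻¹ : X →L[ℂ] X)‖ * ‖T (x n) - l • x n‖) atTop (𝓝 0) := by
    simpa using hx2.const_mul ‖(↑u⁻¹ : X →L[ℂ] X)‖
  obtain ⟨n, hn⟩ := (h3.eventually_lt_const one_pos).exists
  exact absurd (key n) (not_le.mpr hn)

lemma resolvent_norm_lower [CompleteSpace X] (T : X →L[ℂ] X) {l z : ℂ} (hl : l ∈ spectrum ℂ T)
    (u : (X →L[ℂ] X)ˣ) (hu : (↑u : X →L[ℂ] X) = algebraMap ℂ (X →L[ℂ] X) z - T) :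
    1 ≤ ‖(↑u⁻¹ : X →L[ℂ] X)‖ * ‖l - z‖ := by
  by_contra h
  push_neg at h
  apply hl
  rw [spectrum.mem_resolventSet_iff]
  have hnorm : ‖-((l - z) • (↑u⁻¹ : X →L[ℂ] X))‖ < 1 := by
    rw [norm_neg]
    calc ‖(l - z) • (↑u⁻¹ : X →L[ℂ] X)‖ ≤ ‖l - z‖ * ‖(↑u⁻¹ : X →L[ℂ] X)‖ :=
          (↑u⁻¹ : X →L[ℂ] X).opNorm_smul_le (l - z)
      _ < 1 := by rw [mul_comm]; exact h
  have key : algebraMap ℂ (X →L[ℂ] X) l - T = ↑u * (1 - -((l - z) • ↑u⁻¹)) := by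
    rw [sub_neg_eq_add, mul_add, mul_one, mul_smul_comm, u.mul_inv, hu,
      Algebra.algebraMap_eq_smul_one, Algebra.algebraMap_eq_smul_one, sub_smul]
    abel
  rw [key]
  exact u.isUnit.mul (Units.oneSub _ hnorm).isUnit

lemma frontier_spectrum_subset_apSpec [CompleteSpace X] [Nontrivial X] (T : X →L[ℂ] X) :
    frontier (spectrum ℂ T) ⊆ approxPointSpectrum T := by
  intro l hl
  have hcl : IsClosed (spectrum ℂ T) := spectrum.isClosed T
  have hlσ : l ∈ spectrum ℂ T := hcl.frontier_subset hl
  rw [apSpec_iff]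
  intro ε hε
  have hl2 : l ∈ closure (spectrum ℂ T)ᶜ := by
    rw [closure_compl]; exact hl.2
  obtain ⟨z, hz, hzl⟩ := Metric.mem_closure_iff.mp hl2 (ε / 3) (by positivity)
  have hzσ : z ∉ spectrum ℂ T := hz
  obtain ⟨u, hu⟩ := spectrum.notMem_iff.mp hzσ
  have hne : ‖l - z‖ ≠ 0 := by
    simp only [ne_eq, norm_eq_zero, sub_eq_zero]
    rintro rfl; exact hzσ hlσ
  have hdpos : 0 < ‖l - z‖ := lt_of_le_of_ne (norm_nonneg _) (Ne.symm hne)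
  have hdlt : ‖l - z‖ < ε / 3 := by rwa [dist_eq_norm] at hzl
  have hR := resolvent_norm_lower T hlσ u hu
  set R : X →L[ℂ] X := ↑u⁻¹ with hRdef
  have hRpos : 0 < ‖R‖ := by
    rcases (norm_nonneg R).lt_or_eq with h | h
    · exact h
    · exfalso; rw [← h] at hR; simp at hR; linarith [hR, hdpos]
  obtain ⟨x, hx1, hx2⟩ := R.exists_lt_apply_of_lt_opNorm (half_lt_self hRpos)
  set y := R x with hy
  have hypos : 0 < ‖y‖ := lt_of_le_of_lt (by positivity) hx2
  refine ⟨(‖y‖ : ℂ)⁻¹ • y, ?_, ?_⟩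
  · rw [norm_smul, norm_inv, Complex.norm_real, Real.norm_eq_abs, abs_norm]
    field_simp
  · have huy : (↑u : X →L[ℂ] X) y = x := by
      rw [hy, hRdef, ← ContinuousLinearMap.mul_apply, u.mul_inv, ContinuousLinearMap.one_apply]
    have hTy : T y - z • y = -x := by
      have : (↑u : X →L[ℂ] X) y = z • y - T y := by
        rw [hu]
        simp [Algebra.algebraMap_eq_smul_one, ContinuousLinearMap.sub_apply,
          ContinuousLinearMap.smul_apply, ContinuousLinearMap.one_apply]
      rw [← huy, this]; abel
    have hTly : ‖T y - l • y‖ ≤ ‖x‖ + ‖l - z‖ * ‖y‖ := by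
      have : T y - l • y = (T y - z • y) + (z - l) • y := by rw [sub_smul]; abel
      rw [this]
      calc ‖(T y - z • y) + (z - l) • y‖ ≤ ‖T y - z • y‖ + ‖(z - l) • y‖ := norm_add_le _ _
        _ = ‖x‖ + ‖z - l‖ * ‖y‖ := by rw [hTy, norm_neg, norm_smul]
        _ = ‖x‖ + ‖l - z‖ * ‖y‖ := by rw [norm_sub_rev]
    have hnorm : ‖T ((‖y‖ : ℂ)⁻¹ • y) - l • ((‖y‖ : ℂ)⁻¹ • y)‖ = ‖y‖⁻¹ * ‖T y - l • y‖ := by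
      have heq : T ((‖y‖ : ℂ)⁻¹ • y) - l • ((‖y‖ : ℂ)⁻¹ • y)
          = (‖y‖ : ℂ)⁻¹ • (T y - l • y) := by
        rw [map_smul, smul_sub, smul_comm]
      rw [heq, norm_smul, norm_inv, Complex.norm_real, Real.norm_eq_abs, abs_norm]
    rw [hnorm]
    have h2R : 2 / ‖R‖ ≤ 2 * ‖l - z‖ := by
      rw [div_le_iff₀ hRpos]
      calc (2:ℝ) ≤ 2 * (‖R‖ * ‖l - z‖) := by linarith
        _ = 2 * ‖l - z‖ * ‖R‖ := by ring
    have hyinv : ‖y‖⁻¹ ≤ 2 / ‖R‖ := by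
      have h1 : ‖y‖⁻¹ ≤ (‖R‖ / 2)⁻¹ := inv_anti₀ (half_pos hRpos) hx2.le
      rwa [inv_div] at h1
    calc ‖y‖⁻¹ * ‖T y - l • y‖ ≤ ‖y‖⁻¹ * (‖x‖ + ‖l - z‖ * ‖y‖) := by
          apply mul_le_mul_of_nonneg_left hTly (by positivity)
      _ = ‖y‖⁻¹ * ‖x‖ + ‖l - z‖ * (‖y‖⁻¹ * ‖y‖) := by ring
      _ ≤ ‖y‖⁻¹ * 1 + ‖l - z‖ * 1 := by
          apply add_le_add
          · exact mul_le_mul_of_nonneg_left hx1.le (by positivity)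
          · rw [inv_mul_cancel₀ hypos.ne']
      _ = ‖y‖⁻¹ + ‖l - z‖ := by ring
      _ ≤ 2 / ‖R‖ + ‖l - z‖ := by linarith
      _ ≤ 2 * ‖l - z‖ + ‖l - z‖ := by linarith
      _ < 2 * (ε/3) + ε/3 := by linarith
      _ = ε := by ring

lemma step_lemma (U A w T : X →L[ℂ] X) (γ : ℂ) (hγ : ‖γ‖ = 1)
    (hTA : T * A = γ • (A * T)) (hAU : U * A = γ • (A * U)) (hT : T = w * U)
    (p : ℕ → Polynomial ℂ) (hp0 : ∀ k, (p k).eval 0 = 0)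
    (hconv : Tendsto (fun k => ‖w - Polynomial.aeval A (p k)‖) atTop (nhds 0))
    {l : ℂ} (hl : l ∈ approxPointSpectrum T) : γ * l ∈ approxPointSpectrum T := by
  have hγ0 : γ ≠ 0 := by intro h; rw [h] at hγ; simp at hγ
  obtain ⟨x, hx1, hx2⟩ := hl
  by_cases hA' : Tendsto (fun n => A (x n)) atTop (𝓝 0)
  · -- in this case l = 0
    have hAUx : Tendsto (fun n => A (U (x n))) atTop (𝓝 0) := by
      have heq : ∀ n, A (U (x n)) = γ⁻¹ • U (A (x n)) := by
        intro n
        have h1 : U (A (x n)) = γ • A (U (x n)) := by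
          have := congrArg (fun S : X →L[ℂ] X => S (x n)) hAU
          simpa [ContinuousLinearMap.mul_apply] using this
        rw [h1, smul_smul, inv_mul_cancel₀ hγ0, one_smul]
      have h2 : Tendsto (fun n => U (A (x n))) atTop (𝓝 0) := by
        have := (U.continuous.tendsto 0).comp hA'
        simpa [Function.comp_def] using this
      have h3 := h2.const_smul γ⁻¹
      rw [smul_zero] at h3
      exact (funext heq : (fun n => A (U (x n))) = _) ▸ h3
    have hwUx : Tendsto (fun n => w (U (x n))) atTop (𝓝 0) := by
      rw [tendsto_zero_iff_norm_tendsto_zero]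
      rw [Metric.tendsto_atTop]
      intro ε hε
      set δ : ℝ := ε / (2 * (‖U‖ + 1)) with hδdef
      have hδpos : 0 < δ := by positivity
      obtain ⟨k, hk⟩ := (hconv.eventually_lt_const hδpos).exists
      obtain ⟨q, hq⟩ : (Polynomial.X : Polynomial ℂ) ∣ p k :=
        Polynomial.X_dvd_iff.mpr (by rw [Polynomial.coeff_zero_eq_eval_zero]; exact hp0 k)
      have haev : Polynomial.aeval A (p k) = Polynomial.aeval A q * A := by
        rw [hq, mul_comm, map_mul, Polynomial.aeval_X]
      have h2 : Tendsto (fun n => (Polynomial.aeval A (p k)) (U (x n))) atTop (𝓝 0) := by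
        rw [haev]
        simp only [ContinuousLinearMap.mul_apply]
        have := ((Polynomial.aeval A q).continuous.tendsto 0).comp hAUx
        simpa [Function.comp_def] using this
      have h2' : ∀ᶠ n in atTop, ‖(Polynomial.aeval A (p k)) (U (x n))‖ < ε / 2 := by
        exact (tendsto_zero_iff_norm_tendsto_zero.mp h2).eventually_lt_const (half_pos hε)
      rw [Filter.eventually_atTop] at h2'
      obtain ⟨N, hN⟩ := h2'
      refine ⟨N, fun n hn => ?_⟩
      rw [Real.dist_eq, sub_zero, abs_norm]
      have hb1 : ‖w (U (x n))‖ ≤ ‖(w - Polynomial.aeval A (p k)) (U (x n))‖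
          + ‖(Polynomial.aeval A (p k)) (U (x n))‖ := by
        have : w (U (x n)) = (w - Polynomial.aeval A (p k)) (U (x n))
            + (Polynomial.aeval A (p k)) (U (x n)) := by
          simp [ContinuousLinearMap.sub_apply]
        rw [this]; exact norm_add_le _ _
      have hb2 : ‖(w - Polynomial.aeval A (p k)) (U (x n))‖ ≤ δ * (‖U‖ + 1) := by
        calc ‖(w - Polynomial.aeval A (p k)) (U (x n))‖
            ≤ ‖w - Polynomial.aeval A (p k)‖ * ‖U (x n)‖ := ContinuousLinearMap.le_opNorm _ _
          _ ≤ δ * (‖U‖ + 1) := by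
              apply mul_le_mul hk.le _ (norm_nonneg _) hδpos.le
              calc ‖U (x n)‖ ≤ ‖U‖ * ‖x n‖ := U.le_opNorm _
                _ = ‖U‖ := by rw [hx1 n, mul_one]
                _ ≤ ‖U‖ + 1 := by linarith
      have hb3 : δ * (‖U‖ + 1) = ε / 2 := by
        rw [hδdef]; field_simp
      have := hN n hn
      calc ‖w (U (x n))‖ ≤ δ * (‖U‖ + 1) + ‖(Polynomial.aeval A (p k)) (U (x n))‖ := by
            linarith [hb1, hb2]
        _ < ε / 2 + ε / 2 := by linarith
        _ = ε := by ring
    have hTx : Tendsto (fun n => T (x n)) atTop (𝓝 0) := by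
      have : ∀ n, T (x n) = w (U (x n)) := by
        intro n; rw [hT]; rfl
      exact (funext this : (fun n => T (x n)) = _) ▸ hwUx
    have hdiff : Tendsto (fun n => T (x n) - l • x n) atTop (𝓝 0) :=
      tendsto_zero_iff_norm_tendsto_zero.mpr hx2
    have hlx : Tendsto (fun n => l • x n) atTop (𝓝 0) := by
      have := hTx.sub hdiff
      simpa using this
    have hl0 : l = 0 := by
      have h1 : Tendsto (fun n => ‖l • x n‖) atTop (𝓝 0) :=
        tendsto_zero_iff_norm_tendsto_zero.mp hlx
      have h2 : (fun n : ℕ => ‖l • x n‖) = fun _ : ℕ => ‖l‖ := by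
        funext n; rw [norm_smul, hx1 n, mul_one]
      rw [h2] at h1
      have h3 : ‖l‖ = 0 := tendsto_nhds_unique tendsto_const_nhds h1
      exact norm_eq_zero.mp h3
    refine ⟨x, hx1, ?_⟩
    rw [hl0, mul_zero]
    rw [hl0] at hx2
    exact hx2
  · -- frequently bounded below case
    have hfreq : ∃ δ > (0:ℝ), ∃ᶠ n in atTop, δ ≤ ‖A (x n)‖ := by
      by_contra h
      push_neg at h
      apply hA'
      rw [tendsto_zero_iff_norm_tendsto_zero]
      rw [Metric.tendsto_atTop]
      intro ε hε
      have := h ε hε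
      rw [Filter.eventually_atTop] at this
      obtain ⟨N, hN⟩ := this
      refine ⟨N, fun n hn => ?_⟩
      rw [Real.dist_eq, sub_zero, abs_norm]
      have := hN n hn
      exact this
    obtain ⟨δ, hδ, hfr⟩ := hfreq
    obtain ⟨φ, hφ, hbound⟩ := Filter.extraction_of_frequently_atTop hfr
    set y : ℕ → X := fun n => ((‖A (x (φ n))‖ : ℂ))⁻¹ • A (x (φ n)) with hydef
    have hAxpos : ∀ n, 0 < ‖A (x (φ n))‖ := fun n => lt_of_lt_of_le hδ (hbound n)
    refine ⟨y, ?_, ?_⟩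
    · intro n
      rw [hydef]
      simp only [norm_smul, norm_inv, Complex.norm_real, Real.norm_eq_abs, abs_norm]
      exact inv_mul_cancel₀ (hAxpos n).ne'
    · have hTAv : ∀ v, T (A v) = γ • A (T v) := by
        intro v
        have := congrArg (fun S : X →L[ℂ] X => S v) hTA
        simpa [ContinuousLinearMap.mul_apply] using this
      have hbnd : ∀ n, ‖T (y n) - (γ * l) • y n‖
          ≤ δ⁻¹ * (‖A‖ * ‖T (x (φ n)) - l • x (φ n)‖) := by
        intro n
        set c : ℂ := ((‖A (x (φ n))‖ : ℂ))⁻¹ with hcdef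
        have heq : T (y n) - (γ * l) • y n = c • (γ • (A (T (x (φ n)) - l • x (φ n)))) := by
          rw [hydef]
          simp only [map_smul]
          rw [smul_comm (γ * l) c]
          rw [← smul_sub]
          congr 1
          rw [hTAv, map_sub, map_smul, smul_sub, smul_smul]
        rw [heq]
        rw [norm_smul, norm_smul, hγ, one_mul]
        have hc : ‖c‖ ≤ δ⁻¹ := by
          rw [hcdef, norm_inv, Complex.norm_real, Real.norm_eq_abs, abs_norm]
          exact inv_anti₀ hδ (hbound n)
        apply mul_le_mul hc (A.le_opNorm _) (norm_nonneg _) (by positivity)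
      have htend : Tendsto (fun n => δ⁻¹ * (‖A‖ * ‖T (x (φ n)) - l • x (φ n)‖)) atTop (𝓝 0) := by
        have h1 : Tendsto (fun n => ‖T (x (φ n)) - l • x (φ n)‖) atTop (𝓝 0) :=
          hx2.comp (hφ.tendsto_atTop)
        have := (h1.const_mul ‖A‖).const_mul δ⁻¹
        simpa using this
      exact squeeze_zero (fun n => norm_nonneg _) hbnd htend

end Aux

theorem statement_5 {X : Type*} [NormedAddCommGroup X] [NormedSpace ℂ X] [CompleteSpace X]
    (U V A w T : X →L[ℂ] X) (γ : ℂ)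
    (hUV : U * V = 1) (hVU : V * U = 1)
    (hA0 : A ≠ 0) (hγ : ‖γ‖ = 1)
    (hroot : ∀ n : ℕ, 1 ≤ n → γ ^ n ≠ 1)
    (hA : U * A * V = γ • A)
    (hwA : w * A = A * w)
    (hT : T = w * U)
    (p : ℕ → Polynomial ℂ)
    (hp0 : ∀ k, (p k).eval 0 = 0)
    (hconv : Tendsto (fun k => ‖w - Polynomial.aeval A (p k)‖) atTop (nhds 0)) :
    RotationInvariant (spectrum ℂ T) ∧ RotationInvariant (approxPointSpectrum T) := by
  have hγ0 : γ ≠ 0 := by intro h; rw [h] at hγ; simp at hγ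
  have hUA : U * A = γ • (A * U) := by
    have h := congrArg (fun S : X →L[ℂ] X => S * U) hA
    rw [mul_assoc (U * A) V U, hVU, mul_one, smul_mul_assoc] at h
    exact h
  have hTA : T * A = γ • (A * T) := by
    rw [hT, mul_assoc, hUA, mul_smul_comm, ← mul_assoc, hwA, mul_assoc]
  have hNontriv : Nontrivial X := by
    obtain ⟨v, hv⟩ := DFunLike.ne_iff.mp hA0
    exact nontrivial_of_ne (A v) 0 (by simpa using hv)
  have hstep : ∀ l ∈ approxPointSpectrum T, γ * l ∈ approxPointSpectrum T := fun l hl =>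
    step_lemma U A w T γ hγ hTA hUA hT p hp0 hconv hl
  have hpow : ∀ (n : ℕ) (l : ℂ), l ∈ approxPointSpectrum T →
      γ ^ n * l ∈ approxPointSpectrum T := by
    intro n
    induction n with
    | zero => intro l hl; simpa using hl
    | succ n ih =>
        intro l hl
        have h1 := hstep _ (ih l hl)
        rw [← mul_assoc, ← pow_succ'] at h1
        exact h1
  have hapInv : RotationInvariant (approxPointSpectrum T) := by
    intro l hl μ hμ
    have hclosed := isClosed_apSpec T
    rw [← hclosed.closure_eq, Metric.mem_closure_iff]
    intro ε hε
    obtain ⟨n, hn⟩ := dense_pow_circle hγ hroot μ hμ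
      (show (0:ℝ) < ε / (‖l‖ + 1) by positivity)
    refine ⟨γ ^ n * l, hpow n l hl, ?_⟩
    calc dist (μ * l) (γ ^ n * l) = ‖γ ^ n - μ‖ * ‖l‖ := by
          rw [dist_eq_norm]
          rw [show μ * l - γ ^ n * l = (μ - γ ^ n) * l by ring, norm_mul, norm_sub_rev]
      _ ≤ ‖γ ^ n - μ‖ * (‖l‖ + 1) := by
          apply mul_le_mul_of_nonneg_left (by linarith [norm_nonneg l]) (norm_nonneg _)
      _ < (ε / (‖l‖ + 1)) * (‖l‖ + 1) := by
          apply mul_lt_mul_of_pos_right hn (by positivity)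
      _ = ε := by field_simp
  have hspecInv : RotationInvariant (spectrum ℂ T) := by
    intro l hl μ hμ
    by_cases hl0 : l = 0
    · rw [hl0, mul_zero]; rw [hl0] at hl; exact hl
    · have hlnorm : 0 < ‖l‖ := norm_pos_iff.mpr hl0
      have hμlC : μ * l ∈ Metric.sphere (0:ℂ) ‖l‖ := by
        rw [Metric.mem_sphere, dist_zero_right, norm_mul, hμ, one_mul]
      by_cases hC : ∀ z ∈ Metric.sphere (0:ℂ) ‖l‖, z ∈ spectrum ℂ T
      · exact hC _ hμlC
      · push_neg at hC
        obtain ⟨z, hzC, hzσ⟩ := hC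
        have hlC : l ∈ Metric.sphere (0:ℂ) ‖l‖ := by
          rw [Metric.mem_sphere, dist_zero_right]
        have hsphere_conn : IsPreconnected (Metric.sphere (0:ℂ) ‖l‖) := by
          have hrank : 1 < Module.rank ℝ ℂ := by
            rw [Complex.rank_real_complex]; norm_num
          exact (isConnected_sphere hrank 0 hlnorm.le).isPreconnected
        have hfront : ∃ ν ∈ Metric.sphere (0:ℂ) ‖l‖, ν ∈ frontier (spectrum ℂ T) := by
          by_contra h
          push_neg at h
          have hsub : Metric.sphere (0:ℂ) ‖l‖ ⊆
              interior (spectrum ℂ T) ∪ (spectrum ℂ T)ᶜ := by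
            intro ν hν
            by_cases hνσ : ν ∈ spectrum ℂ T
            · left
              by_contra hint
              exact h ν hν ⟨subset_closure hνσ, hint⟩
            · right; exact hνσ
          have hlint : l ∈ interior (spectrum ℂ T) := by
            by_contra hint
            exact h l hlC ⟨subset_closure hl, hint⟩
          have h1 := hsphere_conn (interior (spectrum ℂ T)) (spectrum ℂ T)ᶜ
            isOpen_interior (spectrum.isClosed T).isOpen_compl hsub
            ⟨l, hlC, hlint⟩ ⟨z, hzC, hzσ⟩
          obtain ⟨ν, -, hνint, hνc⟩ := h1
          exact hνc (interior_subset hνint)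
        obtain ⟨ν, hνC, hνf⟩ := hfront
        have hνap : ν ∈ approxPointSpectrum T := frontier_spectrum_subset_apSpec T hνf
        have hνnorm : ‖ν‖ = ‖l‖ := by
          rw [Metric.mem_sphere, dist_zero_right] at hνC; exact hνC
        have hν0 : ν ≠ 0 := by
          intro hz0; rw [hz0, norm_zero] at hνnorm; exact hl0 (norm_eq_zero.mp hνnorm.symm)
        have hfactor : μ * l = (μ * l / ν) * ν := by field_simp
        have hunit : ‖μ * l / ν‖ = 1 := by
          rw [norm_div, norm_mul, hμ, one_mul, hνnorm, div_self hlnorm.ne']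
        have h2 := hapInv ν hνap (μ * l / ν) hunit
        rw [← hfactor] at h2
        exact apSpec_subset_spectrum T h2
  exact ⟨hspecInv, hapInv⟩
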